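/- Let G be a group with a normal subgroup N such that N is torsion-free and nilpotent and the quotient G/N is torsion-free. Then the center Z(N) of N, regarded as a subgroup of G, is a normal subgroup of G, and the quotient group G/Z(N) is torsion-free. -/

import Mathlib

/-- A predicate on a monoid saying that only `1` is of finite order
(the definition `Monoid.IsTorsionFree` of the older Mathlib, since removed). -/
def Monoid.IsTorsionFree (G : Type*) [Monoid G] : Prop :=
  ∀ g : G, g ≠ 1 → ¬IsOfFinOrder g

open scoped commutatorElement

private lemma comm_pow_aux {K : Type*} [Group K] (a b : K)
    (h : ∀ z : K, Commute ⁅a, b⁆ z) : ∀ n : ℕ, ⁅a ^ n, b⁆ = ⁅a, b⁆ ^ n := by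
  intro n
  induction n with
  | zero => simp
  | succ k ih =>
    have key : ⁅a ^ (k + 1), b⁆ = a * ⁅a ^ k, b⁆ * a⁻¹ * ⁅a, b⁆ := by
      simp only [commutatorElement_def, pow_succ']
      group
    rw [key, ih, pow_succ]
    have hk := ((h a).pow_left k).symm.eq
    rw [hk]
    group

/-- Isolation lemma: in a torsion-free group, each term of the upper central
series is isolated in the next one. -/
private lemma iso_aux {H : Type*} [Group H] (htf : Monoid.IsTorsionFree H)
    {n : ℕ} (hn : 0 < n) :
    ∀ i : ℕ, ∀ u : H, u ∈ Subgroup.upperCentralSeries H (i + 1) →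
      u ^ n ∈ Subgroup.upperCentralSeries H i → u ∈ Subgroup.upperCentralSeries H i := by
  intro i
  induction i with
  | zero =>
    intro u _ hun
    simp only [upperCentralSeries_zero, Subgroup.mem_bot] at hun ⊢
    by_contra hne
    exact htf u hne (isOfFinOrder_iff_pow_eq_one.mpr ⟨n, hn, hun⟩)
  | succ i ih =>
    intro u hu hun
    rw [mem_upperCentralSeries_succ_iff]
    intro y
    set Z := Subgroup.upperCentralSeries H i with hZ
    set π := QuotientGroup.mk' Z with hπ
    have hker : ∀ w : H, π w = 1 ↔ w ∈ Z := fun w => QuotientGroup.eq_one_iff w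
    have hcomm : u * y * u⁻¹ * y⁻¹ = ⁅u, y⁆ := (commutatorElement_def u y).symm
    -- ⁅u, y⁆ ∈ ucs (i+1)
    have hc1 : ⁅u, y⁆ ∈ Subgroup.upperCentralSeries H (i + 1) := by
      rw [mem_upperCentralSeries_succ_iff] at hu
      rw [← hcomm]; exact hu y
    -- π ⁅u, y⁆ is central in the quotient
    have hcent : ∀ z : H ⧸ Z, Commute (π ⁅u, y⁆) z := by
      intro z
      obtain ⟨w, rfl⟩ := QuotientGroup.mk'_surjective Z z
      rw [← commutatorElement_eq_one_iff_commute, ← map_commutatorElement, hker]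
      rw [mem_upperCentralSeries_succ_iff] at hc1
      rw [commutatorElement_def]
      exact hc1 w
    -- also π ⁅π u, π y⁆ central obviously: ⁅π u, π y⁆ = π ⁅u,y⁆
    have hmapc : ⁅π u, π y⁆ = π ⁅u, y⁆ := (map_commutatorElement π u y).symm
    have hcent' : ∀ z : H ⧸ Z, Commute ⁅π u, π y⁆ z := by rw [hmapc]; exact hcent
    -- (π ⁅u,y⁆)^n = ⁅(π u)^n, π y⁆ = π ⁅u^n, y⁆ = 1
    have hun' : ⁅u ^ n, y⁆ ∈ Z := by
      rw [mem_upperCentralSeries_succ_iff] at hun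
      rw [commutatorElement_def]
      exact hun y
    have hpow : (π ⁅u, y⁆) ^ n = 1 := by
      rw [← hmapc, ← comm_pow_aux (π u) (π y) hcent' n, ← map_pow, ← map_commutatorElement,
        hker]
      exact hun'
    -- thus ⁅u,y⁆ ^ n ∈ Z
    have hcn : ⁅u, y⁆ ^ n ∈ Z := by rw [← hker, map_pow]; exact hpow
    have := ih ⁅u, y⁆ hc1 hcn
    exact this

theorem malcev_center {H : Type*} [Group H] (htf : Monoid.IsTorsionFree H)
    (hnilp : Group.IsNilpotent H) {x : H} {n : ℕ} (hn : 0 < n)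
    (hx : x ^ n ∈ Subgroup.center H) : x ∈ Subgroup.center H := by
  obtain ⟨k, hk⟩ := hnilp
  have hx1 : x ^ n ∈ Subgroup.upperCentralSeries H 1 := by rwa [upperCentralSeries_one]
  have key : ∀ j : ℕ, x ∈ Subgroup.upperCentralSeries H (j + 1) → x ∈ Subgroup.upperCentralSeries H 1 := by
    intro j
    induction j with
    | zero => exact fun h => h
    | succ j ih =>
      intro h
      refine ih (iso_aux htf hn (j + 1) x h ?_)
      exact upperCentralSeries_mono H (Nat.one_le_iff_ne_zero.mpr (Nat.succ_ne_zero j)) hx1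
  have hxk : x ∈ Subgroup.upperCentralSeries H (k + 1) :=
    upperCentralSeries_mono H (Nat.le_succ k) (hk ▸ Subgroup.mem_top x)
  rw [← upperCentralSeries_one]
  exact key k hxk

/-- Let `G` be a group with a normal subgroup `N` such that `N` is torsion-free
and nilpotent and the quotient `G/N` is torsion-free.  Then the center `Z(N)` of `N`, regarded
as a subgroup of `G`, is a normal subgroup of `G`, and the quotient group `G/Z(N)` is
torsion-free. -/
theorem stmt_8 {G : Type*} [Group G] (N : Subgroup G) [N.Normal]
    (htfN : Monoid.IsTorsionFree N) (hnilp : Group.IsNilpotent N)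
    (htfQ : Monoid.IsTorsionFree (G ⧸ N)) :
    ((Subgroup.center N).map N.subtype).Normal ∧
      ∀ [((Subgroup.center N).map N.subtype).Normal],
        Monoid.IsTorsionFree (G ⧸ (Subgroup.center N).map N.subtype) := by
  refine ⟨inferInstance, ?_⟩
  intro inst
  intro g hg hfin
  obtain ⟨m, hm, hgm⟩ := isOfFinOrder_iff_pow_eq_one.mp hfin
  obtain ⟨x, rfl⟩ := QuotientGroup.mk_surjective g
  set Z := (Subgroup.center N).map N.subtype with hZdef
  have hZN : Z ≤ N := by
    rintro _ ⟨z, _, rfl⟩; exact z.2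
  have hxm : x ^ m ∈ Z := by
    rw [← QuotientGroup.eq_one_iff]
    exact hgm
  -- x ∈ N
  have hxN : x ∈ N := by
    by_contra hxN
    have h1 : (QuotientGroup.mk x : G ⧸ N) ≠ 1 := by
      rwa [ne_eq, QuotientGroup.eq_one_iff]
    refine htfQ _ h1 (isOfFinOrder_iff_pow_eq_one.mpr ⟨m, hm, ?_⟩)
    rw [← QuotientGroup.mk_pow, QuotientGroup.eq_one_iff]
    exact hZN hxm
  -- view x in N, apply malcev
  obtain ⟨z, hz, hzx⟩ := hxm
  have hxc : (⟨x, hxN⟩ : N) ^ m ∈ Subgroup.center N := by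
    have : ((⟨x, hxN⟩ : N) ^ m : N) = (⟨x ^ m, N.pow_mem hxN m⟩ : N) := by
      ext; simp
    rw [this]
    have : (⟨x ^ m, N.pow_mem hxN m⟩ : N) = z := by
      ext; exact hzx.symm
    rw [this]; exact hz
  have hxZ : (⟨x, hxN⟩ : N) ∈ Subgroup.center N := malcev_center htfN hnilp hm hxc
  exact hg (by rw [QuotientGroup.eq_one_iff]; exact ⟨⟨x, hxN⟩, hxZ, rfl⟩)
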